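/- Let $A, H \in \mathbb{R}^{m\times m}$ with $H$ symmetric positive definite and $A$ invertible. Suppose there is a constant $\mu > 0$ such that $\theta^\top A \theta \geq \mu\, \theta^\top H \theta$ for all $\theta \in \mathbb{R}^m$. Then the operator norm of $H^{1/2} A^{-1} H^{1/2}$ is at most $1/\mu$. -/

import Mathlib

open Matrix

/-- The positive semidefinite square root of a positive semidefinite matrix, as defined in the
older Mathlib (`Matrix.PosSemidef.sqrt`, since removed). -/
noncomputable def Matrix.PosSemidef.sqrt {n : Type*} [Fintype n]
    [DecidableEq n] {A : Matrix n n ℝ} (hA : A.PosSemidef) : Matrix n n ℝ :=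
  (hA.1.eigenvectorUnitary : Matrix n n ℝ) *
    diagonal ((RCLike.ofReal : ℝ → ℝ) ∘ (√·) ∘ hA.1.eigenvalues) *
    (star hA.1.eigenvectorUnitary : Matrix n n ℝ)

theorem stmt0_sqrt_transpose {n : Type*} [Fintype n] [DecidableEq n] {B : Matrix n n ℝ}
    (hB : B.PosSemidef) : (Matrix.PosSemidef.sqrt hB)ᵀ = Matrix.PosSemidef.sqrt hB := by
  have hd : (diagonal ((RCLike.ofReal : ℝ → ℝ) ∘ (√·) ∘ hB.1.eigenvalues)).IsHermitian :=
    isHermitian_diagonal _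
  have := isHermitian_mul_mul_conjTranspose (hB.1.eigenvectorUnitary : Matrix n n ℝ) hd
  rw [← conjTranspose_eq_transpose_of_trivial]
  unfold Matrix.PosSemidef.sqrt
  rw [star_eq_conjTranspose]
  exact this

theorem stmt0_sqrt_mul_self {n : Type*} [Fintype n] [DecidableEq n] {B : Matrix n n ℝ}
    (hB : B.PosSemidef) : Matrix.PosSemidef.sqrt hB * Matrix.PosSemidef.sqrt hB = B := by
  unfold Matrix.PosSemidef.sqrt
  conv_rhs => rw [hB.1.spectral_theorem, Unitary.conjStarAlgAut_apply]
  have hU := Unitary.coe_star_mul_self hB.1.eigenvectorUnitary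
  have hDD : diagonal ((RCLike.ofReal : ℝ → ℝ) ∘ (√·) ∘ hB.1.eigenvalues) *
      diagonal ((RCLike.ofReal : ℝ → ℝ) ∘ (√·) ∘ hB.1.eigenvalues) =
      diagonal ((RCLike.ofReal : ℝ → ℝ) ∘ hB.1.eigenvalues) := by
    rw [diagonal_mul_diagonal]
    congr 1
    funext i
    simp [Real.mul_self_sqrt (hB.eigenvalues_nonneg i)]
  calc _ = (hB.1.eigenvectorUnitary : Matrix n n ℝ) *
        (diagonal ((RCLike.ofReal : ℝ → ℝ) ∘ (√·) ∘ hB.1.eigenvalues) *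
        ((star hB.1.eigenvectorUnitary : Matrix n n ℝ) * (hB.1.eigenvectorUnitary : Matrix n n ℝ)) *
        diagonal ((RCLike.ofReal : ℝ → ℝ) ∘ (√·) ∘ hB.1.eigenvalues)) *
        (star hB.1.eigenvectorUnitary : Matrix n n ℝ) := by simp only [Matrix.mul_assoc]
    _ = _ := by rw [hU, Matrix.mul_one, hDD]

/-- If `H` is symmetric positive definite, `A` is invertible, and
`θᵀ A θ ≥ μ θᵀ H θ` for all `θ` with `μ > 0`, then the Euclidean operator norm of
`H^{1/2} A⁻¹ H^{1/2}` is at most `1/μ`. -/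
theorem stmt0 {m : ℕ} (A H : Matrix (Fin m) (Fin m) ℝ)
    (hH : H.PosDef) (hA : IsUnit A) (μ : ℝ) (hμ : 0 < μ)
    (hlower : ∀ θ : Fin m → ℝ, μ * (θ ⬝ᵥ H.mulVec θ) ≤ θ ⬝ᵥ A.mulVec θ) :
    ‖Matrix.toEuclideanCLM (𝕜 := ℝ) (Matrix.PosSemidef.sqrt hH.posSemidef * A⁻¹ * Matrix.PosSemidef.sqrt hH.posSemidef)‖
      ≤ 1 / μ := by
  set S := Matrix.PosSemidef.sqrt hH.posSemidef with hS
  have hSsymm : Sᵀ = S := by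
    exact stmt0_sqrt_transpose _
  have hSS : S * S = H := stmt0_sqrt_mul_self _
  have hAdet : IsUnit A.det := (Matrix.isUnit_iff_isUnit_det A).mp hA
  have hAAinv : A * A⁻¹ = 1 := Matrix.mul_nonsing_inv A hAdet
  apply ContinuousLinearMap.opNorm_le_bound _ (by positivity)
  intro x
  set M := S * A⁻¹ * S with hM
  set y : EuclideanSpace ℝ (Fin m) := Matrix.toEuclideanCLM (𝕜 := ℝ) M x with hy
  set x' : Fin m → ℝ := WithLp.equiv 2 _ x with hx'
  set θ : Fin m → ℝ := A⁻¹.mulVec (S.mulVec x') with hθ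
  have hy' : WithLp.equiv 2 _ y = S.mulVec θ := by
    rw [hy, WithLp.equiv_apply, Matrix.ofLp_toEuclideanCLM, hθ,
      Matrix.mulVec_mulVec, Matrix.mulVec_mulVec, hM, hx', WithLp.equiv_apply]
  set y' : Fin m → ℝ := S.mulVec θ with hy'def
  -- θ ⬝ᵥ H θ = y' ⬝ᵥ y'
  have h1 : θ ⬝ᵥ H.mulVec θ = y' ⬝ᵥ y' := by
    rw [← hSS, ← Matrix.mulVec_mulVec, dotProduct_mulVec θ S,
      ← Matrix.mulVec_transpose, hSsymm]
  -- θ ⬝ᵥ A θ = y' ⬝ᵥ x'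
  have hAθ : A.mulVec θ = S.mulVec x' := by
    rw [hθ, Matrix.mulVec_mulVec, Matrix.mulVec_mulVec, hAAinv, one_mul]
  have h2 : θ ⬝ᵥ A.mulVec θ = y' ⬝ᵥ x' := by
    rw [hAθ, dotProduct_mulVec _ S, ← Matrix.mulVec_transpose, hSsymm]
  -- norms
  have hnormy : ‖y‖ ^ 2 = y' ⬝ᵥ y' := by
    rw [← real_inner_self_eq_norm_sq, EuclideanSpace.inner_eq_star_dotProduct]
    simp [dotProduct, ← hy', EuclideanSpace.inner_eq_star_dotProduct,
      dotProduct, mul_comm]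
  have hinner : (inner ℝ y x : ℝ) = y' ⬝ᵥ x' := by
    simp [dotProduct, ← hy', hx', EuclideanSpace.inner_eq_star_dotProduct,
      dotProduct, mul_comm]
  have key : μ * ‖y‖ ^ 2 ≤ ‖y‖ * ‖x‖ := by
    calc μ * ‖y‖ ^ 2 = μ * (θ ⬝ᵥ H.mulVec θ) := by rw [hnormy, h1]
    _ ≤ θ ⬝ᵥ A.mulVec θ := hlower θ
    _ = (inner ℝ y x : ℝ) := by rw [h2, hinner]
    _ ≤ ‖y‖ * ‖x‖ := real_inner_le_norm y x
  rcases eq_or_lt_of_le (norm_nonneg y) with h0 | h0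
  · rw [← h0]; positivity
  · rw [pow_two, ← mul_assoc] at key
    have h3 : μ * ‖y‖ ≤ ‖x‖ := by nlinarith
    rw [div_mul_eq_mul_div, le_div_iff₀ hμ]
    nlinarith
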